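/- Let A₁ be a finite subset of F_p with 1 < |A₁| and (A₁-A₁)/(A₁-A₁) ≠ F_p, where the quotient set is {(x-y)/(z-w) : x,y,z,w ∈ A₁, z ≠ w}. Then there exist a₁, a₂, b₁, b₂ ∈ A₁ with a₁ ≠ a₂ such that 1 + (b₁-b₂)/(a₁-a₂) ∉ (A₁-A₁)/(A₁-A₁). -/
import Mathlib


open Finset Pointwise

theorem exists_shift_outside_quotient_set {p : ℕ} [Fact p.Prime]
    (A₁ : Finset (ZMod p)) (hcard : 1 < A₁.card)
    (hne : {r : ZMod p | ∃ x ∈ A₁, ∃ y ∈ A₁, ∃ z ∈ A₁, ∃ w ∈ A₁,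
        z ≠ w ∧ r = (x - y) / (z - w)} ≠ Set.univ) :
    ∃ a₁ ∈ A₁, ∃ a₂ ∈ A₁, ∃ b₁ ∈ A₁, ∃ b₂ ∈ A₁, a₁ ≠ a₂ ∧
      1 + (b₁ - b₂) / (a₁ - a₂) ∉
        {r : ZMod p | ∃ x ∈ A₁, ∃ y ∈ A₁, ∃ z ∈ A₁, ∃ w ∈ A₁,
          z ≠ w ∧ r = (x - y) / (z - w)} := by
  set Q : Set (ZMod p) := {r : ZMod p | ∃ x ∈ A₁, ∃ y ∈ A₁, ∃ z ∈ A₁, ∃ w ∈ A₁,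
      z ≠ w ∧ r = (x - y) / (z - w)} with hQ
  by_contra hcon
  push_neg at hcon
  -- Q is closed under adding 1
  have hstep : ∀ q ∈ Q, 1 + q ∈ Q := by
    intro q hq
    obtain ⟨x, hx, y, hy, z, hz, w, hw, hzw, rfl⟩ := hq
    exact hcon z hz w hw x hx y hy hzw
  -- get two distinct elements of A₁
  obtain ⟨a, ha, b, hb, hab⟩ := Finset.one_lt_card.mp hcard
  have h0 : (0 : ZMod p) ∈ Q := by
    exact ⟨a, ha, a, ha, a, ha, b, hb, hab, by simp⟩
  have hnat : ∀ n : ℕ, (n : ZMod p) ∈ Q := by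
    intro n
    induction n with
    | zero => simpa using h0
    | succ n ih =>
        have := hstep _ ih
        rwa [Nat.cast_add, Nat.cast_one, add_comm]
  apply hne
  ext r
  simp only [Set.mem_univ, iff_true]
  obtain ⟨n, rfl⟩ := ZMod.natCast_rightInverse.surjective r
  exact hnat n
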